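/- Let X be a normed vector space over ℂ, let L, U : X → X be continuous linear operators, let N ≥ 2 be an integer with L^N = 0 and U^N = 0 (N-fold composition), and let n ≥ N. Then for every v ∈ X, ‖(L + U)^n v‖ ≤ 2·(∑_{j=1}^{n−1} C(n−1, j) · max_w ‖m_w(L,U)‖) · ‖v‖, where for each j the maximum is over the (nonempty, finite) set of words w of length n with exactly j transitions, ‖m_w(L,U)‖ is the operator norm of the composition m_w(L,U), and C denotes the binomial coefficient. -/

import Mathlib

/-- Value of a word `w : Fin n → Bool` at a natural index, `false` out of range. -/
def wordGet {n : ℕ} (w : Fin n → Bool) (i : ℕ) : Bool :=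
  if h : i < n then w ⟨i, h⟩ else false

/-- The number of transitions of a word `w : Fin n → Bool`, i.e. the number of indices
`i` with `0 ≤ i < n - 1` and `w i ≠ w (i+1)`. -/
def transitions {n : ℕ} (w : Fin n → Bool) : ℕ :=
  ((Finset.range (n - 1)).filter fun i => wordGet w i ≠ wordGet w (i + 1)).card

/-- The monomial `m_w(L,U) = c₀ ∘ c₁ ∘ ⋯ ∘ c_{n-1}` of a word `w : Fin n → Bool`,
where `cᵢ = L` if `w i = true` and `cᵢ = U` if `w i = false` (in the monoid of
continuous linear operators, multiplication is composition). -/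
def wordProd {M : Type*} [Monoid M] {n : ℕ} (w : Fin n → Bool) (x y : M) : M :=
  (List.ofFn fun i : Fin n => if w i then x else y).prod

lemma wordProd_cons {M : Type*} [Monoid M] {n : ℕ} (b : Bool) (w : Fin n → Bool) (x y : M) :
    wordProd (Fin.cons b w) x y = (if b then x else y) * wordProd w x y := by
  simp [wordProd, List.ofFn_succ, Fin.cons_succ]

lemma add_pow_eq_sum_wordProd {R : Type*} [Semiring R] (x y : R) :
    ∀ n : ℕ, (x + y) ^ n = ∑ w : Fin n → Bool, wordProd w x y
  | 0 => by
    rw [pow_zero]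
    rw [Finset.sum_eq_single_of_mem (fun _ : Fin 0 => false) (Finset.mem_univ _)]
    · simp [wordProd]
    · intro w _ hw
      exact absurd (funext fun i => i.elim0) hw
  | (n+1) => by
    rw [pow_succ', add_pow_eq_sum_wordProd x y n]
    rw [← Fintype.sum_equiv (Fin.consEquiv fun _ => Bool)
      (fun p => wordProd (Fin.cons p.1 p.2) x y) (fun w => wordProd w x y) (fun p => rfl)]
    rw [Fintype.sum_prod_type]
    simp only [wordProd_cons]
    rw [Fintype.sum_bool]
    simp [← Finset.mul_sum, add_mul]

lemma wordGet_injective {n : ℕ} {w w' : Fin n → Bool}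
    (h0 : wordGet w 0 = wordGet w' 0)
    (hS : ∀ i ∈ Finset.range (n - 1),
      ((wordGet w i ≠ wordGet w (i + 1)) ↔ (wordGet w' i ≠ wordGet w' (i + 1)))) :
    w = w' := by
  have key : ∀ i, wordGet w i = wordGet w' i := by
    intro i
    induction i with
    | zero => exact h0
    | succ i ih =>
      by_cases h : i + 1 < n
      · have hi : i ∈ Finset.range (n - 1) := by rw [Finset.mem_range]; omega
        have hiff := hS i hi
        revert ih hiff
        cases wordGet w i <;> cases wordGet w (i + 1) <;>
          cases wordGet w' i <;> cases wordGet w' (i + 1) <;> simp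
      · simp [wordGet, h]
  funext i
  have := key i.val
  simpa [wordGet, i.isLt] using this

lemma card_fiber_le {n : ℕ} (j : ℕ) :
    (Finset.univ.filter fun w : Fin n → Bool => transitions w = j).card
      ≤ 2 * (n - 1).choose j := by
  classical
  have := Finset.card_le_card_of_injOn
    (s := Finset.univ.filter fun w : Fin n → Bool => transitions w = j)
    (t := (Finset.univ : Finset Bool) ×ˢ (Finset.range (n - 1)).powersetCard j)
    (fun w => (wordGet w 0, (Finset.range (n - 1)).filter
      fun i => wordGet w i ≠ wordGet w (i + 1)))
    (by
      intro w hw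
      rw [Finset.mem_coe, Finset.mem_filter] at hw
      rw [Finset.mem_coe, Finset.mem_product]
      refine ⟨Finset.mem_univ _, ?_⟩
      rw [Finset.mem_powersetCard]
      exact ⟨Finset.filter_subset _ _, hw.2⟩)
    (by
      intro w hw w' hw' heq
      have h0 : wordGet w 0 = wordGet w' 0 := congrArg Prod.fst heq
      have h1 : (Finset.range (n - 1)).filter (fun i => wordGet w i ≠ wordGet w (i + 1))
          = (Finset.range (n - 1)).filter (fun i => wordGet w' i ≠ wordGet w' (i + 1)) :=
        congrArg Prod.snd heq
      refine wordGet_injective h0 ?_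
      intro i hi
      constructor
      · intro hne
        have : i ∈ (Finset.range (n - 1)).filter
            (fun i => wordGet w i ≠ wordGet w (i + 1)) := Finset.mem_filter.2 ⟨hi, hne⟩
        rw [h1, Finset.mem_filter] at this
        exact this.2
      · intro hne
        have : i ∈ (Finset.range (n - 1)).filter
            (fun i => wordGet w' i ≠ wordGet w' (i + 1)) := Finset.mem_filter.2 ⟨hi, hne⟩
        rw [← h1, Finset.mem_filter] at this
        exact this.2)
  calc (Finset.univ.filter fun w : Fin n → Bool => transitions w = j).card
      ≤ ((Finset.univ : Finset Bool) ×ˢ (Finset.range (n - 1)).powersetCard j).card := this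
    _ = 2 * (n - 1).choose j := by
        rw [Finset.card_product, Finset.card_powersetCard, Finset.card_range]
        simp

lemma wordProd_of_transitions_eq_zero {M : Type*} [Monoid M] {n : ℕ} (w : Fin n → Bool)
    (h : transitions w = 0) (x y : M) :
    wordProd w x y = (if wordGet w 0 then x else y) ^ n := by
  have hconst : ∀ i, wordGet w i = wordGet w 0 ∨ ¬ i < n := by
    intro i
    induction i with
    | zero => exact Or.inl rfl
    | succ i ih =>
      by_cases hi : i + 1 < n
      · left
        have hmem : i ∈ Finset.range (n - 1) := by rw [Finset.mem_range]; omega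
        have hfe : (Finset.range (n - 1)).filter
            (fun i => wordGet w i ≠ wordGet w (i + 1)) = ∅ :=
          Finset.card_eq_zero.1 h
        have : ¬ (wordGet w i ≠ wordGet w (i + 1)) := by
          intro hne
          have : i ∈ (Finset.range (n - 1)).filter
              (fun i => wordGet w i ≠ wordGet w (i + 1)) := Finset.mem_filter.2 ⟨hmem, hne⟩
          rw [hfe] at this
          exact absurd this (Finset.notMem_empty _)
        rcases ih with ih | ih
        · rw [← not_ne_iff.1 this, ih]
        · exact absurd (by omega : i < n) ih
      · exact Or.inr hi
  have hw : ∀ i : Fin n, w i = wordGet w 0 := by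
    intro i
    rcases hconst i.val with hc | hc
    · rw [← hc]; simp [wordGet, i.isLt]
    · exact absurd i.isLt hc
  unfold wordProd
  have : (fun i : Fin n => if w i then x else y)
      = fun _ : Fin n => if wordGet w 0 then x else y := by
    funext i; rw [hw i]
  rw [this, List.ofFn_const, List.prod_replicate]

theorem norm_add_pow_apply_le_sum_choose_mul_sup {X : Type*} [NormedAddCommGroup X]
    [NormedSpace ℂ X] (L U : X →L[ℂ] X) (N : ℕ) (hN : 2 ≤ N)
    (hL : L ^ N = 0) (hU : U ^ N = 0) (n : ℕ) (hn : N ≤ n) (v : X) :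
    ‖((L + U) ^ n) v‖ ≤
      2 * (∑ j ∈ Finset.Icc 1 (n - 1), ((n - 1).choose j : ℝ) *
        ⨆ w : {w : Fin n → Bool // transitions w = j}, ‖wordProd w.1 L U‖) * ‖v‖ := by
  classical
  have hn2 : 2 ≤ n := le_trans hN hn
  set sup : ℕ → ℝ := fun j =>
    ⨆ w : {w : Fin n → Bool // transitions w = j}, ‖wordProd w.1 L U‖ with hsup
  have sup_nonneg : ∀ j, 0 ≤ sup j := fun j =>
    Real.iSup_nonneg fun w => norm_nonneg _
  set f : ℕ → ℝ := fun j =>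
    ∑ w ∈ Finset.univ.filter fun w : Fin n → Bool => transitions w = j,
      ‖wordProd w L U‖ with hf
  -- step 1: operator norm bound
  have step1 : ‖((L + U) ^ n) v‖ ≤ (∑ w : Fin n → Bool, ‖wordProd w L U‖) * ‖v‖ := by
    calc ‖((L + U) ^ n) v‖ ≤ ‖(L + U) ^ n‖ * ‖v‖ := ContinuousLinearMap.le_opNorm _ v
      _ ≤ (∑ w : Fin n → Bool, ‖wordProd w L U‖) * ‖v‖ := by
          apply mul_le_mul_of_nonneg_right _ (norm_nonneg v)
          rw [add_pow_eq_sum_wordProd]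
          exact norm_sum_le _ _
  -- step 2: fiberwise decomposition
  have htrans_lt : ∀ w : Fin n → Bool, transitions w ∈ Finset.range n := by
    intro w
    rw [Finset.mem_range]
    have : transitions w ≤ n - 1 := by
      unfold transitions
      calc ((Finset.range (n - 1)).filter _).card ≤ (Finset.range (n - 1)).card :=
            Finset.card_filter_le _ _
        _ = n - 1 := Finset.card_range _
    omega
  have step2 : (∑ w : Fin n → Bool, ‖wordProd w L U‖) = ∑ j ∈ Finset.range n, f j := by
    rw [← Finset.sum_fiberwise_of_maps_to (fun w _ => htrans_lt w)
      (fun w => ‖wordProd w L U‖)]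
  -- step 3: the zero-transition fiber contributes 0
  have hLn : L ^ n = 0 := pow_eq_zero_of_le hn hL
  have hUn : U ^ n = 0 := pow_eq_zero_of_le hn hU
  have step3 : f 0 = 0 := by
    apply Finset.sum_eq_zero
    intro w hw
    rw [Finset.mem_filter] at hw
    rw [wordProd_of_transitions_eq_zero w hw.2 L U]
    cases wordGet w 0 <;> simp [hLn, hUn]
  -- step 4: each fiber is bounded
  have step4 : ∀ j, f j ≤ (2 * (n - 1).choose j : ℝ) * sup j := by
    intro j
    have hle : f j ≤ (Finset.univ.filter fun w : Fin n → Bool => transitions w = j).card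
        • sup j := by
      apply Finset.sum_le_card_nsmul
      intro w hw
      rw [Finset.mem_filter] at hw
      simp only [hsup]
      exact le_ciSup
        (f := fun w' : {w : Fin n → Bool // transitions w = j} => ‖wordProd w'.1 L U‖)
        (Finite.bddAbove_range _) ⟨w, hw.2⟩
    calc f j ≤ (Finset.univ.filter fun w : Fin n → Bool => transitions w = j).card • sup j := hle
      _ = ((Finset.univ.filter fun w : Fin n → Bool => transitions w = j).card : ℝ) * sup j := by
          rw [nsmul_eq_mul]
      _ ≤ (2 * (n - 1).choose j : ℝ) * sup j := by
          apply mul_le_mul_of_nonneg_right _ (sup_nonneg j)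
          exact_mod_cast card_fiber_le j
  -- step 5: range n = insert 0 (Icc 1 (n-1))
  have hrange : Finset.range n = insert 0 (Finset.Icc 1 (n - 1)) := by
    ext i
    simp only [Finset.mem_range, Finset.mem_insert, Finset.mem_Icc]
    omega
  have h0notin : 0 ∉ Finset.Icc 1 (n - 1) := by simp
  -- assemble
  have key : (∑ w : Fin n → Bool, ‖wordProd w L U‖) ≤
      2 * ∑ j ∈ Finset.Icc 1 (n - 1), ((n - 1).choose j : ℝ) * sup j := by
    rw [step2, hrange, Finset.sum_insert h0notin, step3, zero_add, Finset.mul_sum]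
    apply Finset.sum_le_sum
    intro j _
    calc f j ≤ (2 * (n - 1).choose j : ℝ) * sup j := step4 j
      _ = 2 * (((n - 1).choose j : ℝ) * sup j) := by ring
  have final : ‖((L + U) ^ n) v‖ ≤
      2 * (∑ j ∈ Finset.Icc 1 (n - 1), ((n - 1).choose j : ℝ) * sup j) * ‖v‖ :=
    le_trans step1 (mul_le_mul_of_nonneg_right key (norm_nonneg v))
  simpa only [hsup] using final
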